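/- For every integer p ≥ 1, D_p = (2/π^{2p}) · Σ_{k=1}^{∞} (-1)^{k+1}/k^{2p}, where the series on the right converges. -/

import Mathlib

open Finset PowerSeries Real

lemma rescale_two_X : PowerSeries.rescale (2:ℚ) PowerSeries.X = 2 * PowerSeries.X := by
  rw [PowerSeries.rescale_X]
  ext n
  rw [show ((2:PowerSeries ℚ)) = PowerSeries.C (2:ℚ) from (map_ofNat (PowerSeries.C (R := ℚ)) 2).symm]

lemma exp_sub_one_ne : (PowerSeries.exp ℚ - 1) ≠ 0 := fun h => by
  have := congrArg (PowerSeries.coeff 1) h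
  simp [PowerSeries.coeff_exp] at this

lemma key_ps : PowerSeries.rescale (2:ℚ) (bernoulliPowerSeries ℚ) * (PowerSeries.exp ℚ + 1)
    = 2 * bernoulliPowerSeries ℚ := by
  have h0 := bernoulliPowerSeries_mul_exp_sub_one ℚ
  have h1 := congrArg (PowerSeries.rescale (2:ℚ)) h0
  rw [map_mul, map_sub, map_one, rescale_two_X] at h1
  have h2 : PowerSeries.rescale (2:ℚ) (PowerSeries.exp ℚ) = PowerSeries.exp ℚ ^ 2 := by
    rw [PowerSeries.exp_pow_eq_rescale_exp]; norm_num
  rw [h2] at h1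
  apply mul_left_cancel₀ exp_sub_one_ne
  have : PowerSeries.exp ℚ ^ 2 - 1 = (PowerSeries.exp ℚ - 1) * (PowerSeries.exp ℚ + 1) := by ring
  rw [this] at h1
  calc (PowerSeries.exp ℚ - 1) * (PowerSeries.rescale (2:ℚ) (bernoulliPowerSeries ℚ) * (PowerSeries.exp ℚ + 1))
      = PowerSeries.rescale (2:ℚ) (bernoulliPowerSeries ℚ) * ((PowerSeries.exp ℚ - 1) * (PowerSeries.exp ℚ + 1)) := by ring
    _ = 2 * PowerSeries.X := h1
    _ = 2 * (bernoulliPowerSeries ℚ * (PowerSeries.exp ℚ - 1)) := by rw [h0]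
    _ = (PowerSeries.exp ℚ - 1) * (2 * bernoulliPowerSeries ℚ) := by ring

lemma lemA (m : ℕ) : ∑ j ∈ range (m+1), (m.choose j : ℚ) * 2^j * bernoulli j
    = (2 - 2^m) * bernoulli m := by
  have h := congrArg (PowerSeries.coeff m) key_ps
  rw [PowerSeries.coeff_mul, Finset.Nat.sum_antidiagonal_eq_sum_range_succ_mk] at h
  rw [show ((2:PowerSeries ℚ)) = PowerSeries.C (2:ℚ) from (map_ofNat (PowerSeries.C (R := ℚ)) 2).symm,
    PowerSeries.coeff_C_mul] at h
  simp only [PowerSeries.coeff_rescale, bernoulliPowerSeries, PowerSeries.coeff_mk,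
    map_add, PowerSeries.coeff_exp, PowerSeries.coeff_one, Algebra.algebraMap_self,
    RingHom.id_apply] at h
  have h2 : ∑ j ∈ range (m+1), 2^j * (bernoulli j / (j.factorial : ℚ)) * (1/((m-j).factorial : ℚ))
      + 2^m * (bernoulli m / (m.factorial : ℚ)) = 2 * (bernoulli m / (m.factorial : ℚ)) := by
    rw [← h]
    have expand : ∀ j ∈ range (m+1),
        2^j * (bernoulli j / (j.factorial : ℚ)) * (1/((m-j).factorial : ℚ) + if m - j = 0 then 1 else 0)
        = 2^j * (bernoulli j / (j.factorial : ℚ)) * (1/((m-j).factorial : ℚ))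
          + (if j = m then 2^m * (bernoulli m / (m.factorial : ℚ)) else 0) := by
      intro j hj
      rw [Finset.mem_range] at hj
      by_cases hjm : j = m
      · subst hjm; simp; ring
      · have h0 : ¬ (m - j = 0) := by omega
        simp [h0, hjm]
    rw [show (Nat.succ m) = m + 1 from rfl, Finset.sum_congr rfl expand, Finset.sum_add_distrib,
      Finset.sum_ite_eq' (range (m+1)) m]
    simp
  have hm : (m.factorial : ℚ) ≠ 0 := Nat.cast_ne_zero.mpr m.factorial_ne_zero
  calc ∑ j ∈ range (m + 1), (m.choose j : ℚ) * 2 ^ j * bernoulli j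
      = (m.factorial : ℚ) * ∑ j ∈ range (m+1), 2^j * (bernoulli j / (j.factorial : ℚ)) * (1/((m-j).factorial : ℚ)) := by
        rw [Finset.mul_sum]
        refine Finset.sum_congr rfl fun j hj => ?_
        rw [Finset.mem_range] at hj
        have hjm : j ≤ m := by omega
        rw [Nat.cast_choose ℚ hjm]
        have h1 : (j.factorial : ℚ) ≠ 0 := Nat.cast_ne_zero.mpr j.factorial_ne_zero
        have h2 : ((m - j).factorial : ℚ) ≠ 0 := Nat.cast_ne_zero.mpr (m - j).factorial_ne_zero
        field_simp
    _ = (m.factorial : ℚ) * (2 * (bernoulli m / (m.factorial : ℚ)) - 2^m * (bernoulli m / (m.factorial : ℚ))) := by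
        rw [← h2]; ring
    _ = (2 - 2^m) * bernoulli m := by field_simp

lemma sum_range_even_odd (f : ℕ → ℚ) (N : ℕ) :
    ∑ j ∈ range (2*N), f j = ∑ k ∈ range N, f (2*k) + ∑ k ∈ range N, f (2*k+1) := by
  induction N with
  | zero => simp
  | succ N ih =>
    have : 2 * (N + 1) = (2 * N + 1) + 1 := by ring
    rw [this, Finset.sum_range_succ, Finset.sum_range_succ, Finset.sum_range_succ,
      Finset.sum_range_succ, ih]
    ring

lemma bernoulli_odd_zero {k : ℕ} (hk : 1 ≤ k) : bernoulli (2*k+1) = 0 := by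
  rw [bernoulli_eq_bernoulli'_of_ne_one (by omega)]
  exact bernoulli'_eq_zero_of_odd ⟨k, by ring⟩ (by omega)

lemma lemB (n : ℕ) (hn : 1 ≤ n) :
    ∑ k ∈ range (n+1), ((2*n+1).choose (2*k) : ℚ) * ((4:ℚ)^k - 2) * bernoulli (2*k) = 0 := by
  set f : ℕ → ℚ := fun j => ((2*n+1).choose j : ℚ) * ((2:ℚ)^j - 2) * bernoulli j with hf
  have hB : bernoulli (2*n+1) = 0 := bernoulli_odd_zero hn
  have h1 : ∑ j ∈ range (2*n+2), ((2*n+1).choose j : ℚ) * (2:ℚ)^j * bernoulli j = 0 := by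
    have := lemA (2*n+1)
    rw [show 2*n+1+1 = 2*n+2 from rfl] at this
    rw [this, hB, mul_zero]
  have h2 : ∑ j ∈ range (2*n+2), ((2*n+1).choose j : ℚ) * bernoulli j = 0 := by
    rw [Finset.sum_range_succ, Nat.choose_self, hB]
    have := sum_bernoulli (2*n+1)
    rw [if_neg (by omega : ¬ (2*n+1 = 1))] at this
    rw [this]; simp
  have hS : ∑ j ∈ range (2*n+2), f j = 0 := by
    have : ∀ j, f j = ((2*n+1).choose j : ℚ) * (2:ℚ)^j * bernoulli j
        - 2 * (((2*n+1).choose j : ℚ) * bernoulli j) := by intro j; rw [hf]; ring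
    simp only [this]
    rw [Finset.sum_sub_distrib, h1, ← Finset.mul_sum, h2]
    ring
  have hsplit := sum_range_even_odd f (n+1)
  rw [show 2*(n+1) = 2*n+2 from by ring] at hsplit
  have hodd : ∑ k ∈ range (n+1), f (2*k+1) = 0 := by
    apply Finset.sum_eq_zero
    intro k hk
    simp only [hf]
    by_cases hk0 : k = 0
    · subst hk0; norm_num
    · rw [bernoulli_odd_zero (by omega)]; ring
  have heven : ∑ k ∈ range (n+1), f (2*k) = 0 := by
    have := hS
    rw [hsplit, hodd, add_zero] at this
    exact this
  rw [← heven]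
  refine Finset.sum_congr rfl fun k _ => ?_
  simp only [hf]
  rw [show (2:ℚ)^(2*k) = 4^k from by rw [pow_mul]; norm_num]

/-- Generalized Hessenberg matrix: first row uses shifted factorials. -/
def Mmat (s n : ℕ) : Matrix (Fin n) (Fin n) ℚ := fun i j =>
  if (i : ℕ) = 0 then 1 / (((2 * (s + (j:ℕ)) + 3).factorial : ℚ))
  else if (i : ℕ) ≤ (j : ℕ) then 1 / (((2 * ((j:ℕ) - (i:ℕ)) + 3).factorial : ℚ))
  else if (j : ℕ) + 1 = (i : ℕ) then 1 else 0

noncomputable def dd (n : ℕ) : ℚ := (Mmat 0 n).det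

lemma dd_zero : dd 0 = 1 := by
  simp [dd, Matrix.det_fin_zero]

lemma succAbove_one_val {n : ℕ} (r : Fin (n+1)) :
    (((1 : Fin (n+2)).succAbove r : Fin (n+2)) : ℕ) = if (r:ℕ) = 0 then 0 else (r:ℕ)+1 := by
  by_cases h : (r:ℕ) = 0
  · rw [if_pos h]
    rw [Fin.succAbove_of_castSucc_lt _ _ (by rw [Fin.lt_def]; simp [h])]
    simp [h]
  · rw [if_neg h]
    rw [Fin.succAbove_of_le_castSucc _ _ (by rw [Fin.le_def]; simp; omega)]
    simp

lemma Mmat_det_one (s : ℕ) : (Mmat s 1).det = 1 / (((2*s+3).factorial : ℚ)) := by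
  rw [Matrix.det_fin_one]
  simp [Mmat]

lemma fact_congr (a b : ℕ) (h : a = b) : (1 : ℚ)/(a.factorial : ℚ) = 1/(b.factorial : ℚ) := by
  rw [h]

lemma Mmat_rec (s n : ℕ) :
    (Mmat s (n+2)).det = 1 / (((2*s+3).factorial : ℚ)) * (Mmat 0 (n+1)).det
      - (Mmat (s+1) (n+1)).det := by
  rw [Matrix.det_succ_column_zero, Fin.sum_univ_succ, Fin.sum_univ_succ]
  have hzero : ∀ i : Fin n, (-1:ℚ)^(((i.succ.succ : Fin (n+2)) : ℕ))
      * Mmat s (n+2) i.succ.succ 0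
      * (Matrix.submatrix (Mmat s (n+2)) (i.succ.succ).succAbove Fin.succ).det = 0 := by
    intro i
    have h0 : Mmat s (n+2) i.succ.succ 0 = 0 := by
      simp only [Mmat, Fin.val_succ, Fin.val_zero]
      split_ifs <;> simp_all
    rw [h0]; ring
  rw [Finset.sum_eq_zero (fun i _ => hzero i), add_zero]
  have e0 : Matrix.submatrix (Mmat s (n+2)) (0 : Fin (n+2)).succAbove Fin.succ
      = Mmat 0 (n+1) := by
    ext r c
    simp only [Matrix.submatrix_apply, Fin.succAbove_zero, Mmat, Fin.val_succ]
    split_ifs <;> first | rfl | exact fact_congr _ _ (by omega) | exact False.elim ‹False› | (exfalso; omega)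
  have e1 : Matrix.submatrix (Mmat s (n+2)) ((0 : Fin (n+1)).succ).succAbove Fin.succ
      = Mmat (s+1) (n+1) := by
    ext r c
    have hv : ((((0 : Fin (n+1)).succ).succAbove r : Fin (n+2)) : ℕ)
        = if (r:ℕ) = 0 then 0 else (r:ℕ)+1 := succAbove_one_val r
    by_cases hr : (r:ℕ) = 0
    · have hv0 : ((((0 : Fin (n+1)).succ).succAbove r : Fin (n+2)) : ℕ) = 0 := by
        rw [hv, if_pos hr]
      simp only [Matrix.submatrix_apply, Mmat, Fin.val_succ, hv0, hr]
      split_ifs <;> first | rfl | exact fact_congr _ _ (by omega) | exact False.elim ‹False› | (exfalso; omega)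
    · have hv0 : ((((0 : Fin (n+1)).succ).succAbove r : Fin (n+2)) : ℕ) = (r:ℕ)+1 := by
        rw [hv, if_neg hr]
      simp only [Matrix.submatrix_apply, Mmat, Fin.val_succ, hv0]
      split_ifs <;> first | rfl | exact fact_congr _ _ (by omega) | exact False.elim ‹False› | (exfalso; omega)
  have v0 : Mmat s (n+2) 0 0 = 1 / (((2*s+3).factorial : ℚ)) := by
    simp only [Mmat, Fin.val_zero]
    norm_num
  have v1 : Mmat s (n+2) (Fin.succ (0 : Fin (n+1))) 0 = 1 := by
    simp only [Mmat, Fin.val_zero, Fin.val_succ]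
    norm_num
  rw [e0, e1, v0, v1]
  simp only [Fin.val_zero, Fin.val_succ, pow_zero, pow_one]
  norm_num
  ring

lemma Mmat_sum : ∀ n s, (Mmat s (n+1)).det
    = ∑ j ∈ range (n+1), (-1:ℚ)^j * (1/(((2*(s+j)+3).factorial : ℚ))) * dd (n-j) := by
  intro n
  induction n with
  | zero =>
    intro s
    rw [Mmat_det_one]
    simp [dd_zero]
  | succ n ih =>
    intro s
    rw [Mmat_rec, Finset.sum_range_succ']
    have hdd : (Mmat 0 (n+1)).det = dd (n+1) := rfl
    rw [hdd, ih (s+1)]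
    have : ∀ j ∈ range (n+1),
        (-1:ℚ)^(j+1) * (1/(((2*(s+(j+1))+3).factorial : ℚ))) * dd (n+1-(j+1))
        = -((-1:ℚ)^j * (1/(((2*(s+1+j)+3).factorial : ℚ))) * dd (n-j)) := by
      intro j _
      rw [show s+(j+1) = s+1+j from by ring, show n+1-(j+1) = n-j from by omega, pow_succ]
      ring
    rw [Finset.sum_congr rfl this, Finset.sum_neg_distrib]
    simp only [pow_zero, Nat.add_zero, Nat.sub_zero, one_mul]
    ring

lemma dd_conv (n : ℕ) : ∑ m ∈ range (n+1), (-1:ℚ)^m / (((2*m+1).factorial : ℚ)) * dd (n-m)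
    = if n = 0 then 1 else 0 := by
  cases n with
  | zero => simp [dd_zero]
  | succ n =>
    rw [if_neg (Nat.succ_ne_zero n)]
    rw [Finset.sum_range_succ']
    have hdd : dd (n+1) = ∑ j ∈ range (n+1),
        (-1:ℚ)^j * (1/(((2*(0+j)+3).factorial : ℚ))) * dd (n-j) := Mmat_sum n 0
    simp only [pow_zero, Nat.sub_zero]
    have : ∀ m ∈ range (n+1),
        (-1:ℚ)^(m+1) / (((2*(m+1)+1).factorial : ℚ)) * dd (n+1-(m+1))
        = -((-1:ℚ)^m * (1/(((2*(0+m)+3).factorial : ℚ))) * dd (n-m)) := by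
      intro m _
      rw [show 2*(m+1)+1 = 2*(0+m)+3 from by ring, show n+1-(m+1) = n-m from by omega, pow_succ]
      ring
    rw [Finset.sum_congr rfl this, Finset.sum_neg_distrib, ← hdd]
    norm_num

noncomputable def ee (n : ℕ) : ℚ :=
  (-1)^(n+1) * ((4:ℚ)^n - 2) * bernoulli (2*n) / (((2*n).factorial : ℚ))

lemma ee_zero : ee 0 = 1 := by
  simp [ee]
  norm_num

lemma ee_conv (n : ℕ) : ∑ m ∈ range (n+1), (-1:ℚ)^m / (((2*m+1).factorial : ℚ)) * ee (n-m)
    = if n = 0 then 1 else 0 := by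
  cases n with
  | zero => simp [ee_zero]
  | succ n =>
    rw [if_neg (Nat.succ_ne_zero n)]
    have key : ∀ m ∈ range (n+2),
        (-1:ℚ)^m / (((2*m+1).factorial : ℚ)) * ee (n+1-m)
        = (-1:ℚ)^(n+2) / (((2*(n+1)+1).factorial : ℚ)) *
          (((2*(n+1)+1).choose (2*(n+1-m)) : ℚ) * ((4:ℚ)^(n+1-m) - 2)
            * bernoulli (2*(n+1-m))) := by
      intro m hm
      rw [Finset.mem_range] at hm
      set k := n+1-m with hk
      have hmk : m + k = n+1 := by omega
      have f1 : (((2*m+1).factorial : ℚ)) ≠ 0 := Nat.cast_ne_zero.mpr (Nat.factorial_ne_zero _)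
      have f2 : (((2*k).factorial : ℚ)) ≠ 0 := Nat.cast_ne_zero.mpr (Nat.factorial_ne_zero _)
      have f3 : (((2*(n+1)+1).factorial : ℚ)) ≠ 0 := Nat.cast_ne_zero.mpr (Nat.factorial_ne_zero _)
      have hchoose : ((2*(n+1)+1).choose (2*k) : ℚ)
          = (((2*(n+1)+1).factorial : ℚ)) / ((((2*k).factorial : ℚ)) * (((2*m+1).factorial : ℚ))) := by
        rw [Nat.cast_choose ℚ (by omega : 2*k ≤ 2*(n+1)+1)]
        rw [show 2*(n+1)+1 - 2*k = 2*m+1 from by omega]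
      have hsgn : (-1:ℚ)^m * (-1:ℚ)^(k+1) = (-1:ℚ)^(n+2) := by
        rw [← pow_add, show m+(k+1) = n+2 from by omega]
      rw [ee, hchoose]
      rw [← hsgn]
      field_simp
    rw [Finset.sum_congr rfl key, ← Finset.mul_sum]
    have hreflect : ∑ m ∈ range (n+2),
        (((2*(n+1)+1).choose (2*(n+1-m)) : ℚ) * ((4:ℚ)^(n+1-m) - 2) * bernoulli (2*(n+1-m)))
        = ∑ j ∈ range (n+2),
        (((2*(n+1)+1).choose (2*j) : ℚ) * ((4:ℚ)^j - 2) * bernoulli (2*j)) := by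
      have := Finset.sum_range_reflect
        (fun j => (((2*(n+1)+1).choose (2*j) : ℚ) * ((4:ℚ)^j - 2) * bernoulli (2*j))) (n+2)
      simpa using this
    rw [hreflect, lemB (n+1) (by omega), mul_zero]

lemma dd_eq_ee : ∀ n, dd n = ee n := by
  intro n
  induction n using Nat.strong_induction_on with
  | _ n ih =>
    cases n with
    | zero => rw [dd_zero, ee_zero]
    | succ n =>
      have h1 := dd_conv (n+1)
      have h2 := ee_conv (n+1)
      rw [if_neg (Nat.succ_ne_zero n)] at h1 h2
      have hsum : ∑ m ∈ range (n+1),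
          (-1:ℚ)^(m+1) / (((2*(m+1)+1).factorial : ℚ)) * dd (n+1-(m+1))
          = ∑ m ∈ range (n+1),
          (-1:ℚ)^(m+1) / (((2*(m+1)+1).factorial : ℚ)) * ee (n+1-(m+1)) := by
        refine Finset.sum_congr rfl fun m hm => ?_
        rw [ih (n+1-(m+1)) (by omega)]
      rw [Finset.sum_range_succ', hsum] at h1
      rw [Finset.sum_range_succ'] at h2
      have h3 := h1.trans h2.symm
      have h4 := add_left_cancel h3
      simpa using h4

/-- `D 0 = 1` and, for `k ≥ 1`, `D k` is the determinant of the `k × k` rational matrix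
whose `(i, j)` entry is `1/(2(j-i)+3)!` when `j ≥ i`, `1` when `j = i - 1`,
and `0` when `j < i - 1`. -/
def D : ℕ → ℚ
  | 0 => 1
  | k + 1 =>
    Matrix.det (fun i j : Fin (k + 1) =>
      if (i : ℕ) ≤ (j : ℕ) then 1 / ((2 * ((j : ℕ) - (i : ℕ)) + 3).factorial : ℚ)
      else if (j : ℕ) + 1 = (i : ℕ) then 1 else 0)

lemma D_eq_ee (p : ℕ) : D p = ee p := by
  rw [← dd_eq_ee]
  cases p with
  | zero => rw [dd_zero]; rfl
  | succ k =>
    have hM : (fun i j : Fin (k + 1) =>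
        if (i : ℕ) ≤ (j : ℕ) then 1 / ((2 * ((j : ℕ) - (i : ℕ)) + 3).factorial : ℚ)
        else if (j : ℕ) + 1 = (i : ℕ) then 1 else 0) = Mmat 0 (k+1) := by
      ext i j
      simp only [Mmat]
      split_ifs <;> first | rfl | exact fact_congr _ _ (by omega) | (exfalso; omega)
    show Matrix.det _ = dd (k+1)
    rw [hM]
    rfl

theorem det_eq_alternating_sum (p : ℕ) (hp : 1 ≤ p) :
    ∃ S : ℝ,
      HasSum (fun k : ℕ => (-1 : ℝ) ^ ((k + 1) + 1) / ((k : ℝ) + 1) ^ (2 * p)) S ∧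
        (D p : ℝ) = 2 / Real.pi ^ (2 * p) * S := by
  have hp2 : 2 * p ≠ 0 := by omega
  have hZ := hasSum_zeta_nat (k := p) (by omega)
  set Z : ℝ := (-1 : ℝ) ^ (p + 1) * (2 : ℝ) ^ (2 * p - 1) * π ^ (2 * p) *
      (bernoulli (2 * p) : ℝ) / (((2 * p).factorial : ℕ) : ℝ) with hZdef
  set F : ℕ → ℝ := fun n => 1 / ((n : ℝ) + 1) ^ (2 * p) with hFdef
  have hF : HasSum F Z := by
    have h := (hasSum_nat_add_iff' (f := fun n : ℕ => 1 / (n : ℝ) ^ (2 * p)) 1).mpr hZ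
    simp only [Finset.range_one, Finset.sum_singleton, Nat.cast_zero,
      zero_pow hp2, div_zero, sub_zero, Nat.cast_add, Nat.cast_one] at h
    exact h
  have hodd_fun : (fun j : ℕ => F (2 * j + 1)) = fun j => ((2 : ℝ) ^ (2 * p))⁻¹ * F j := by
    funext j
    have hx : ((j : ℝ) + 1) ≠ 0 := by positivity
    simp only [hFdef]
    rw [show (((2 * j + 1 : ℕ) : ℝ) + 1) = 2 * ((j : ℝ) + 1) by push_cast; ring, mul_pow]
    rw [one_div, mul_inv, ← one_div ((((j : ℝ) + 1)) ^ (2 * p))]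
  have hEodd : HasSum (fun j : ℕ => F (2 * j + 1)) (((2 : ℝ) ^ (2 * p))⁻¹ * Z) := by
    rw [hodd_fun]; exact hF.mul_left _
  have hSummEven : Summable (fun j : ℕ => F (2 * j)) :=
    hF.summable.comp_injective (fun a b h => by omega)
  obtain ⟨A, hA⟩ := hSummEven
  have htot : HasSum F (A + ((2 : ℝ) ^ (2 * p))⁻¹ * Z) := hA.even_add_odd hEodd
  have hAval : A + ((2 : ℝ) ^ (2 * p))⁻¹ * Z = Z := htot.unique hF
  refine ⟨A - ((2 : ℝ) ^ (2 * p))⁻¹ * Z, ?_, ?_⟩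
  · set G : ℕ → ℝ := fun k => (-1 : ℝ) ^ ((k + 1) + 1) / ((k : ℝ) + 1) ^ (2 * p) with hGdef
    have he2 : HasSum (fun j : ℕ => G (2 * j)) A := by
      have hfun : (fun j : ℕ => G (2 * j)) = fun j => F (2 * j) := by
        funext j
        simp only [hGdef, hFdef]
        rw [Even.neg_one_pow ⟨j + 1, by ring⟩]
      rw [hfun]; exact hA
    have ho2 : HasSum (fun j : ℕ => G (2 * j + 1)) (-(((2 : ℝ) ^ (2 * p))⁻¹ * Z)) := by
      have hfun : (fun j : ℕ => G (2 * j + 1)) = fun j => -(F (2 * j + 1)) := by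
        funext j
        simp only [hGdef, hFdef]
        rw [Odd.neg_one_pow ⟨j + 1, by ring⟩]
        push_cast
        ring
      rw [hfun]; exact hEodd.neg
    have h := he2.even_add_odd ho2
    rw [← sub_eq_add_neg] at h
    exact h
  · rw [D_eq_ee p, ee]
    have hAeq : A = Z - ((2 : ℝ) ^ (2 * p))⁻¹ * Z := by linarith [hAval]
    rw [hAeq]
    push_cast
    have hpi : (π : ℝ) ^ (2 * p) ≠ 0 := pow_ne_zero _ Real.pi_ne_zero
    have hfac : (((2 * p).factorial : ℕ) : ℝ) ≠ 0 := Nat.cast_ne_zero.mpr (Nat.factorial_ne_zero _)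
    have h2 : (2 : ℝ) ^ (2 * p - 1) = 2 ^ (2 * p) / 2 := by
      rw [eq_div_iff (two_ne_zero' ℝ), ← pow_succ, show 2 * p - 1 + 1 = 2 * p from by omega]
    have h4 : (4 : ℝ) ^ p = 2 ^ (2 * p) := by
      rw [show (4 : ℝ) = 2 ^ 2 from by norm_num, ← pow_mul]
    rw [hZdef, h2, h4]
    have h2p : (2 : ℝ) ^ (2 * p) ≠ 0 := pow_ne_zero _ two_ne_zero
    field_simp
    ring
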